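/- arXiv:0805.3923 — 2 statements merged into one kernel-verified Lean document; each statement's English description precedes it below -/
import Mathlib

section
/- For real β, X > 0, and h ∈ ℕ with h ≥ 1, writing S(X,h,β) = ∑_{1 ≤ n ≤ X} ε(n) ε(n+h) e(β n) with e(x) = exp(2πix), one has S(X, 2h, β) = (1 + e(β)) · S(X/2, h, 2β) + O(1), where the implied constant is absolute. -/
open Complex Finset

/-- `e(x) = exp(2πix)`. -/
noncomputable def e (x : ℝ) : ℂ := Complex.exp (2 * Real.pi * Complex.I * x)

/-- `ε(n) = (-1)^(s₂ n)` where `s₂` is the binary digit sum. -/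
def eps (n : ℕ) : ℤ := (-1) ^ ((Nat.digits 2 n).sum)

/-- `S(Y,h,β) = ∑_{1 ≤ n ≤ Y} ε(n) ε(n+h) e(βn)`. -/
noncomputable def S (Y : ℝ) (h : ℕ) (β : ℝ) : ℂ :=
  ∑ n ∈ Finset.Icc 1 ⌊Y⌋₊, (eps n : ℂ) * (eps (n + h) : ℂ) * e (β * n)

lemma abs_e (x : ℝ) : ‖e x‖ = 1 := by
  rw [e, Complex.norm_exp]
  have : (2 * (Real.pi : ℂ) * Complex.I * (x : ℂ)).re = 0 := by
    simp [Complex.mul_re, Complex.mul_im]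
  rw [this, Real.exp_zero]

lemma abs_eps (n : ℕ) : ‖(eps n : ℂ)‖ = 1 := by
  have : ((eps n : ℤ) : ℂ) = (-1 : ℂ) ^ ((Nat.digits 2 n).sum) := by
    rw [eps]; push_cast; ring
  rw [this, norm_pow]
  simp

lemma eps_two_mul (n : ℕ) : eps (2 * n) = eps n := by
  rcases Nat.eq_zero_or_pos n with rfl | hn
  · rfl
  · unfold eps
    rw [Nat.digits_def' (by norm_num : 1 < 2) (by omega)]
    have h1 : (2 * n) % 2 = 0 := by omega
    have h2 : (2 * n) / 2 = n := by omega
    rw [h1, h2]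
    simp

lemma eps_two_mul_add_one (n : ℕ) : eps (2 * n + 1) = - eps n := by
  unfold eps
  rw [Nat.digits_def' (by norm_num : 1 < 2) (by omega)]
  have h1 : (2 * n + 1) % 2 = 1 := by omega
  have h2 : (2 * n + 1) / 2 = n := by omega
  rw [h1, h2]
  simp [pow_add]

lemma e_add (x y : ℝ) : e (x + y) = e x * e y := by
  rw [e, e, e, ← Complex.exp_add]
  push_cast
  ring_nf

lemma sum_range_two_mul {M : Type*} [AddCommMonoid M] (f : ℕ → M) (k : ℕ) :
    ∑ n ∈ range (2 * k), f n = ∑ m ∈ range k, f (2 * m) + ∑ m ∈ range k, f (2 * m + 1) := by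
  induction k with
  | zero => simp
  | succ k ih =>
    have h : 2 * (k + 1) = 2 * k + 1 + 1 := by ring
    rw [h, Finset.sum_range_succ, Finset.sum_range_succ, Finset.sum_range_succ,
      Finset.sum_range_succ, ih]
    abel

theorem S_two_mul_h : ∃ C : ℝ, ∀ (β X : ℝ) (h : ℕ), 0 < X → 1 ≤ h →
    ‖S X (2 * h) β - ((1 + e β) * S (X / 2) h (2 * β))‖ ≤ C := by
  use 4
  intro β X h hX hh
  set N := ⌊X⌋₊ with hN
  set M := ⌊X / 2⌋₊ with hM
  have hMN : M = N / 2 := by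
    rw [hM, hN, show (X / 2) = X / (2 : ℕ) by norm_num, Nat.floor_div_natCast]
  set f : ℕ → ℂ := fun n => (eps n : ℂ) * (eps (n + 2 * h) : ℂ) * e (β * n) with hf
  set g : ℕ → ℂ := fun m => (eps m : ℂ) * (eps (m + h) : ℂ) * e ((2 * β) * m) with hg
  have habs_f : ∀ n, ‖f n‖ = 1 := by
    intro n
    show ‖_ * _ * _‖ = 1
    rw [norm_mul, norm_mul, abs_eps, abs_eps, abs_e]; ring
  have habs_g : ∀ n, ‖g n‖ = 1 := by
    intro n
    show ‖_ * _ * _‖ = 1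
    rw [norm_mul, norm_mul, abs_eps, abs_eps, abs_e]; ring
  have hfg_even : ∀ m, f (2 * m) = g m := by
    intro m
    simp only [hf, hg]
    rw [show 2 * m + 2 * h = 2 * (m + h) by ring, eps_two_mul, eps_two_mul]
    congr 2
    push_cast
    ring
  have hfg_odd : ∀ m, f (2 * m + 1) = e β * g m := by
    intro m
    simp only [hf, hg]
    rw [show 2 * m + 1 + 2 * h = 2 * (m + h) + 1 by ring, eps_two_mul_add_one,
      eps_two_mul_add_one]
    have : (β : ℝ) * (2 * m + 1 : ℕ) = 2 * β * m + β := by push_cast; ring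
    rw [this, e_add]
    push_cast
    ring
  have key : ∀ k, ∑ n ∈ range (2 * k), f n = (1 + e β) * ∑ m ∈ range k, g m := by
    intro k
    rw [sum_range_two_mul,
      Finset.sum_congr rfl (fun m _ => hfg_even m),
      Finset.sum_congr rfl (fun m _ => hfg_odd m),
      ← Finset.mul_sum]
    ring
  have hins : ∀ (K : ℕ) (F : ℕ → ℂ), ∑ n ∈ range (K + 1), F n = F 0 + ∑ n ∈ Icc 1 K, F n := by
    intro K F
    have : range (K + 1) = insert 0 (Icc 1 K) := by
      ext x
      simp [Nat.lt_succ_iff]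
      omega
    rw [this, Finset.sum_insert (by simp)]
  have hS1 : ∑ n ∈ range (N + 1), f n = f 0 + S X (2 * h) β := by
    rw [hins]; rfl
  have hS2 : ∑ m ∈ range (M + 1), g m = g 0 + S (X / 2) h (2 * β) := by
    rw [hins]; rfl
  have hkey : ∑ n ∈ range (2 * (M + 1)), f n
      = (1 + e β) * (g 0 + S (X / 2) h (2 * β)) := by
    rw [key, hS2]
  -- D is the difference between range (2M+2) and range (N+1) sums
  have hD : ‖∑ n ∈ range (2 * (M + 1)), f n - ∑ n ∈ range (N + 1), f n‖ ≤ 1 := by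
    rcases Nat.even_or_odd N with ⟨t, ht⟩ | ⟨t, ht⟩
    · -- N = 2t, M = t, 2*(M+1) = N+2
      have hMt : M = t := by omega
      have h2 : 2 * (M + 1) = (N + 1) + 1 := by omega
      rw [h2, Finset.sum_range_succ]
      simp [habs_f]
    · -- N = 2t+1, M = t, 2*(M+1) = N+1
      have h2 : 2 * (M + 1) = N + 1 := by omega
      rw [h2]
      simp
  have hone : ‖1 + e β‖ ≤ 2 := by
    calc ‖1 + e β‖ ≤ ‖(1:ℂ)‖ + ‖e β‖ :=
          norm_add_le _ _
      _ = 2 := by rw [abs_e]; norm_num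
  have heq : S X (2 * h) β - (1 + e β) * S (X / 2) h (2 * β)
      = (1 + e β) * g 0 - f 0
        - (∑ n ∈ range (2 * (M + 1)), f n - ∑ n ∈ range (N + 1), f n) := by
    linear_combination hkey - hS1
  rw [heq]
  calc ‖(1 + e β) * g 0 - f 0
        - (∑ n ∈ range (2 * (M + 1)), f n - ∑ n ∈ range (N + 1), f n)‖
      ≤ ‖(1 + e β) * g 0 - f 0‖
        + ‖∑ n ∈ range (2 * (M + 1)), f n - ∑ n ∈ range (N + 1), f n‖ :=
        norm_sub_le _ _
    _ ≤ (‖(1 + e β) * g 0‖ + ‖f 0‖) + 1 := by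
        gcongr
        exact norm_sub_le _ _
    _ ≤ (2 + 1) + 1 := by
        have h1 : ‖(1 + e β) * g 0‖ ≤ 2 := by
          rw [norm_mul, habs_g, mul_one]; exact hone
        have h2 : ‖f 0‖ ≤ 1 := le_of_eq (habs_f 0)
        gcongr
    _ ≤ 4 := by norm_num
end

section
/- Suppose α is real, q, N, j₀ are positive integers and h is a positive integer with α = a/q + θ/q², (a,q) = 1, |θ| < 1, and 2^{N+j₀+2} h < q/10. Then for every j with 1 ≤ j ≤ j₀, ‖2^{j+N+1} · 2h · α‖ ≥ 9/(10q), where ‖x‖ denotes the distance of x to the nearest integer. -/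
/-- `‖x‖ = min({x}, 1 - {x})`, the distance from `x` to the nearest integer. -/
noncomputable def distNearestInt (x : ℝ) : ℝ := min (Int.fract x) (1 - Int.fract x)

theorem dist_lower_bound (α θ : ℝ) (a : ℤ) (q N j₀ h : ℕ)
    (hq : 0 < q) (hN : 0 < N) (hj₀ : 0 < j₀) (hh : 0 < h)
    (hgcd : Int.gcd a q = 1) (hθ : |θ| < 1)
    (hα : α = (a : ℝ) / q + θ / q ^ 2)
    (hsmall : (2 : ℝ) ^ (N + j₀ + 2) * h < q / 10) :
    ∀ j : ℕ, 1 ≤ j → j ≤ j₀ →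
      distNearestInt ((2 : ℝ) ^ (j + N + 1) * (2 * h) * α) ≥ 9 / (10 * q) := by
  intro j hj1 hjj₀
  set m : ℕ := 2 ^ (j + N + 2) * h with hm
  have hx : (2 : ℝ) ^ (j + N + 1) * (2 * h) * α = (m : ℝ) * α := by
    push_cast [hm, pow_succ]; ring
  have hqR : (0 : ℝ) < q := by exact_mod_cast hq
  have hq' : (q : ℝ) ≠ 0 := hqR.ne'
  have hmlt : (m : ℝ) < q / 10 := by
    refine lt_of_le_of_lt ?_ hsmall
    have hnat : m ≤ 2 ^ (N + j₀ + 2) * h :=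
      Nat.mul_le_mul_right _ (Nat.pow_le_pow_right (by norm_num) (by omega))
    exact_mod_cast hnat
  have hmq : m < q := by
    have : (m : ℝ) < q := lt_of_lt_of_le hmlt (by linarith)
    exact_mod_cast this
  have hm0 : 0 < m := by positivity
  have hndvd : ¬ ((q : ℤ) ∣ (m : ℤ) * a) := by
    intro hdvd
    have hcop : IsCoprime (q : ℤ) a := by
      rw [Int.isCoprime_iff_gcd_eq_one, Int.gcd_comm]; exact hgcd
    have : (q : ℤ) ∣ (m : ℤ) := hcop.dvd_of_dvd_mul_right hdvd
    have := Int.le_of_dvd (by exact_mod_cast hm0) this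
    omega
  set k : ℤ := round ((m : ℝ) * α) with hk
  have hne : (m : ℤ) * a - k * q ≠ 0 := by
    intro hzero
    exact hndvd ⟨k, by linarith⟩
  have habs : (1 : ℝ) ≤ |(((m : ℤ) * a - k * (q : ℤ) : ℤ) : ℝ)| := by
    have := Int.one_le_abs hne
    exact_mod_cast this
  have hfrac : 1 / (q : ℝ) ≤ |(m : ℝ) * a / q - k| := by
    have heq : |(m : ℝ) * a / q - k| = |(((m : ℤ) * a - k * (q : ℤ) : ℤ) : ℝ)| / q := by
      rw [eq_div_iff hq', ← abs_of_pos hqR, ← abs_mul]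
      congr 1
      push_cast
      field_simp
      rw [abs_of_pos hqR]
      ring
    rw [heq]
    gcongr
  have hθm : |(m : ℝ) * θ / q ^ 2| < 1 / (10 * q) := by
    have h1 : |(m : ℝ) * θ / q ^ 2| = m * |θ| / q ^ 2 := by
      rw [abs_div, abs_mul, abs_of_pos (by exact_mod_cast hm0 : (0:ℝ) < m),
        abs_of_pos (pow_pos hqR 2)]
    rw [h1]
    have h2 : (m : ℝ) * |θ| ≤ m := by nlinarith [abs_nonneg θ]
    have h3 : (m : ℝ) / q ^ 2 < (q / 10) / q ^ 2 := by gcongr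
    have h4 : ((q : ℝ) / 10) / q ^ 2 = 1 / (10 * q) := by field_simp
    calc (m : ℝ) * |θ| / q ^ 2 ≤ (m : ℝ) / q ^ 2 := by gcongr
    _ < 1 / (10 * (q : ℝ)) := by rw [← h4]; exact h3
  rw [distNearestInt, ← abs_sub_round_eq_min, hx, ← hk]
  have hsplit : (m : ℝ) * α - k = ((m : ℝ) * a / q - k) + (m : ℝ) * θ / q ^ 2 := by
    rw [hα]; ring
  have htri : |(m : ℝ) * a / q - k| - |(m : ℝ) * θ / q ^ 2| ≤ |(m : ℝ) * α - k| := by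
    rw [hsplit]
    have := abs_add_le (((m : ℝ) * a / q - k) + (m : ℝ) * θ / q ^ 2) (-((m : ℝ) * θ / q ^ 2))
    simp at this
    linarith [abs_neg ((m : ℝ) * θ / q ^ 2)]
  have hfin : 9 / (10 * (q : ℝ)) = 1 / q - 1 / (10 * q) := by
    field_simp
    ring
  linarith
end
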